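/- Let d ≥ 1, s ≥ 0 and σ > d/2 with σ ≥ s if s ≤ d/2, and σ = s if s > d/2. There exists a constant c > 0, depending only on d, s and σ, such that for all v, w ∈ H^{max(s,σ)}(𝕋^d): (i) ‖w² w̄‖_{H^s} ≤ c ‖w‖_{H^σ}² ‖w‖_{H^s}, and (ii) ‖v² v̄ − w² w̄‖_{H^s} ≤ c ‖v − w‖_{H^s} ( ‖v‖_{H^σ}² + ‖v‖_{H^σ} ‖w‖_{H^σ} + ‖w‖_{H^σ}² ). -/

import Mathlib

open Complex Filter MeasureTheory Set

noncomputable section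

/-- A function on the torus `𝕋^d`, identified with its sequence of Fourier coefficients. -/
abbrev TSeq (d : ℕ) := (Fin d → ℤ) → ℂ

/-- `|k|² = k₁² + ⋯ + k_d²`. -/
def nsq {d : ℕ} (k : Fin d → ℤ) : ℝ := ∑ i, ((k i : ℝ)) ^ 2

/-- Sobolev weight `1 + |k|^{2s}`. -/
def wt (d : ℕ) (s : ℝ) (k : Fin d → ℤ) : ℝ := 1 + nsq k ^ s

/-- Membership in `H^s(𝕋^d)`. -/
def InHs (d : ℕ) (s : ℝ) (a : TSeq d) : Prop :=
  Summable fun k => wt d s k * ‖a k‖ ^ 2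

/-- The `H^s(𝕋^d)` norm; `‖·‖_{L²} = Hnorm d 0`. -/
def Hnorm (d : ℕ) (s : ℝ) (a : TSeq d) : ℝ :=
  Real.sqrt (∑' k, wt d s k * ‖a k‖ ^ 2)

/-- Free Schrödinger group `e^{itΔ}`: `(e^{itΔ}a)_k = e^{−it|k|²} a_k`. -/
def sgroup (d : ℕ) (t : ℝ) (a : TSeq d) : TSeq d :=
  fun k => Complex.exp (-Complex.I * ((t * nsq k : ℝ) : ℂ)) * a k

/-- `φ₁(z) = (e^z − 1)/z`, `φ₁(0) = 1`. -/
def phi1 (z : ℂ) : ℂ := if z = 0 then 1 else (Complex.exp z - 1) / z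

/-- `φ₁(iτΔ)`: multiplication by `φ₁(−iτ|k|²)`; `φ₁(−iτΔ)` is `phi1Op d (-τ)`. -/
def phi1Op (d : ℕ) (τ : ℝ) (a : TSeq d) : TSeq d :=
  fun k => phi1 (-Complex.I * ((τ * nsq k : ℝ) : ℂ)) * a k

/-- Product of functions = convolution of Fourier coefficients. -/
def convSeq (d : ℕ) (a b : TSeq d) : TSeq d := fun k => ∑' l, a l * b (k - l)

/-- Complex conjugation: `(ā)_k = conj (a_{−k})`. -/
def conjSeq (d : ℕ) (a : TSeq d) : TSeq d := fun k => (starRingEnd ℂ) (a (-k))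

/-- Cubic nonlinearity `f(u,ū) = −i u² ū`. -/
def nonlin (d : ℕ) (a : TSeq d) : TSeq d :=
  fun k => -Complex.I * convSeq d (convSeq d a a) (conjSeq d a) k

/-- `ψ_E^{τ/2}(v) = −i(τ/2) e^{iτΔ}(v² φ₁(−iτΔ) v̄)`. -/
def psiE (d : ℕ) (τ : ℝ) (v : TSeq d) : TSeq d :=
  fun k => -Complex.I * ((τ / 2 : ℝ) : ℂ) *
    sgroup d τ (convSeq d (convSeq d v v) (phi1Op d (-τ) (conjSeq d v))) k

/-- `ψ_I^{τ/2}(w) = −i(τ/2) (w² φ₁(iτΔ) w̄)`. -/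
def psiI (d : ℕ) (τ : ℝ) (w : TSeq d) : TSeq d :=
  fun k => -Complex.I * ((τ / 2 : ℝ) : ℂ) *
    convSeq d (convSeq d w w) (phi1Op d τ (conjSeq d w)) k

/-- `S_v(z) = e^{iτΔ}v + ψ_E^{τ/2}(v) + ψ_I^{τ/2}(z)`. -/
def Sv (d : ℕ) (τ : ℝ) (v z : TSeq d) : TSeq d :=
  fun k => sgroup d τ v k + psiE d τ v k + psiI d τ z k

/-- `Φ` is the `H^σ`-limit of the iterates `S_v^j(e^{iτΔ}v)`, i.e. `Φ = φ^τ(v)`. -/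
def SchemeLim (d : ℕ) (τ σ : ℝ) (v Φ : TSeq d) : Prop :=
  Tendsto (fun j => Hnorm d σ ((Sv d τ v)^[j] (sgroup d τ v) - Φ)) atTop (nhds 0)

/-- `Φ` is a fixed point of `S_v`, i.e. solves the implicit equation of the scheme. -/
def FixedPt (d : ℕ) (τ : ℝ) (v Φ : TSeq d) : Prop := Φ = Sv d τ v Φ

/-- Mild solution of the cubic NLS `i∂ₜu = −Δu + |u|²u` on `[0,T]` with values in `H^α(𝕋^d)`:
continuity in `H^α` and the Duhamel formula (stated coefficientwise, which is equivalent to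
the Bochner-integral formulation in `L²`). -/
def IsMildSol (d : ℕ) (T α : ℝ) (u : ℝ → TSeq d) : Prop :=
  (∀ t ∈ Icc (0:ℝ) T, InHs d α (u t)) ∧
  (∀ t ∈ Icc (0:ℝ) T,
      Tendsto (fun t' => Hnorm d α (u t' - u t)) (nhdsWithin t (Icc (0:ℝ) T)) (nhds 0)) ∧
  (∀ t ∈ Icc (0:ℝ) T, ∀ k, u t k =
      Complex.exp (-Complex.I * ((t * nsq k : ℝ) : ℂ)) * u 0 k +
      ∫ s in (0:ℝ)..t, Complex.exp (-Complex.I * (((t - s) * nsq k : ℝ) : ℂ)) * nonlin d (u s) k)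

namespace CubicAux

open ENNReal

variable {d : ℕ}

lemma nsq_nonneg (k : Fin d → ℤ) : 0 ≤ nsq k :=
  Finset.sum_nonneg fun i _ => sq_nonneg _

lemma nsq_neg (k : Fin d → ℤ) : nsq (-k) = nsq k := by
  unfold nsq; congr 1; ext i; rw [Pi.neg_apply]; push_cast; ring

lemma one_le_base (k : Fin d → ℤ) : (1:ℝ) ≤ 1 + nsq k := by linarith [nsq_nonneg k]

lemma base_pos (k : Fin d → ℤ) : (0:ℝ) < 1 + nsq k := lt_of_lt_of_le one_pos (one_le_base k)

/-- homogeneous real weight `(1+|k|²)^t` -/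
def pw (d : ℕ) (t : ℝ) (k : Fin d → ℤ) : ℝ := (1 + nsq k) ^ t

lemma pw_pos (t : ℝ) (k : Fin d → ℤ) : 0 < pw d t k := Real.rpow_pos_of_pos (base_pos k) _

lemma pw_nonneg (t : ℝ) (k : Fin d → ℤ) : 0 ≤ pw d t k := (pw_pos t k).le

lemma pw_add (t u : ℝ) (k : Fin d → ℤ) : pw d (t + u) k = pw d t k * pw d u k :=
  Real.rpow_add (base_pos k) t u

lemma pw_zero (k : Fin d → ℤ) : pw d 0 k = 1 := Real.rpow_zero _

lemma pw_neg_mul (t : ℝ) (k : Fin d → ℤ) : pw d (-t) k * pw d t k = 1 := by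
  rw [← pw_add]; simpa using pw_zero k

lemma pw_sq (t : ℝ) (k : Fin d → ℤ) : pw d t k ^ 2 = pw d (2 * t) k := by
  rw [← Real.rpow_natCast (pw d t k) 2, pw, ← Real.rpow_mul (base_pos k).le]
  push_cast
  rw [mul_comm t 2]; rfl

lemma pw_neg' (t : ℝ) (k : Fin d → ℤ) : pw d t (-k) = pw d t k := by
  unfold pw; rw [nsq_neg]

/-- `wt ≤ 2 pw` -/
lemma wt_le_two_pw {s : ℝ} (hs : 0 ≤ s) (k : Fin d → ℤ) : wt d s k ≤ 2 * pw d s k := by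
  have h1 : (1:ℝ) ≤ pw d s k := Real.one_le_rpow (one_le_base k) hs
  have h2 : nsq k ^ s ≤ pw d s k :=
    Real.rpow_le_rpow (nsq_nonneg k) (by linarith [nsq_nonneg k]) hs
  unfold wt; linarith

/-- `pw ≤ 2^s wt` -/
lemma one_le_wt {s : ℝ} (k : Fin d → ℤ) : 1 ≤ wt d s k := by
  unfold wt
  have := Real.rpow_nonneg (nsq_nonneg k) s
  linarith

lemma pw_le_wt {s : ℝ} (hs : 0 ≤ s) (k : Fin d → ℤ) : pw d s k ≤ (2:ℝ) ^ s * wt d s k := by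
  have h2 : (0:ℝ) < (2:ℝ) ^ (s:ℝ) := Real.rpow_pos_of_pos two_pos s
  rcases le_total (nsq k) 1 with h | h
  · have h1 : pw d s k ≤ (2:ℝ) ^ (s:ℝ) :=
      Real.rpow_le_rpow (base_pos k).le (by linarith) hs
    have := one_le_wt (s := s) k
    nlinarith
  · have h1 : pw d s k ≤ ((2:ℝ) * nsq k) ^ (s:ℝ) :=
      Real.rpow_le_rpow (base_pos k).le (by linarith) hs
    have h3 : ((2:ℝ) * nsq k) ^ (s:ℝ) = (2:ℝ) ^ (s:ℝ) * nsq k ^ s :=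
      Real.mul_rpow (by norm_num) (nsq_nonneg k)
    have h4 : nsq k ^ s ≤ wt d s k := by unfold wt; linarith
    nlinarith [Real.rpow_nonneg (nsq_nonneg k) s]

lemma wt_nonneg {s : ℝ} (k : Fin d → ℤ) : 0 ≤ wt d s k := by
  unfold wt
  have := Real.rpow_nonneg (nsq_nonneg k) s
  linarith

lemma nsq_add3 (l m n : Fin d → ℤ) : nsq (l + m + n) ≤ 3 * (nsq l + nsq m + nsq n) := by
  unfold nsq
  calc (∑ i, (((l + m + n) i : ℝ)) ^ 2)
      ≤ ∑ i, (3 * (((l i : ℝ)) ^ 2 + ((m i : ℝ)) ^ 2 + ((n i : ℝ)) ^ 2)) := by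
        refine Finset.sum_le_sum fun i _ => ?_
        simp only [Pi.add_apply]; push_cast; nlinarith [sq_nonneg ((l i : ℝ) - m i),
          sq_nonneg ((l i : ℝ) - n i), sq_nonneg ((m i : ℝ) - n i)]
    _ = 3 * ((∑ i, ((l i : ℝ)) ^ 2) + (∑ i, ((m i : ℝ)) ^ 2) + (∑ i, ((n i : ℝ)) ^ 2)) := by
        rw [← Finset.mul_sum, Finset.sum_add_distrib, Finset.sum_add_distrib]

lemma nsq_add2 (l m : Fin d → ℤ) : nsq (l + m) ≤ 2 * (nsq l + nsq m) := by
  unfold nsq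
  calc (∑ i, (((l + m) i : ℝ)) ^ 2)
      ≤ ∑ i, (2 * (((l i : ℝ)) ^ 2 + ((m i : ℝ)) ^ 2)) := by
        refine Finset.sum_le_sum fun i _ => ?_
        simp only [Pi.add_apply]; push_cast; nlinarith [sq_nonneg ((l i : ℝ) - m i)]
    _ = 2 * ((∑ i, ((l i : ℝ)) ^ 2) + (∑ i, ((m i : ℝ)) ^ 2)) := by
        rw [← Finset.mul_sum, Finset.sum_add_distrib]

lemma rpow_max_le_3 {s : ℝ} (hs : 0 ≤ s) (x y z : ℝ) (hx : 0 < x) (hy : 0 < y) (hz : 0 < z) :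
    (max x (max y z)) ^ s ≤ x ^ s + y ^ s + z ^ s := by
  have nx := Real.rpow_nonneg hx.le s
  have ny := Real.rpow_nonneg hy.le s
  have nz := Real.rpow_nonneg hz.le s
  rcases max_choice y z with h | h <;> rcases max_choice x (max y z) with h' | h' <;>
    rw [h'] <;> first | linarith | (rw [h]; linarith)

lemma peetre3 {s : ℝ} (hs : 0 ≤ s) (l m n : Fin d → ℤ) :
    pw d (s / 2) (l + m + n) ≤
      3 ^ s * (pw d (s / 2) l + pw d (s / 2) m + pw d (s / 2) n) := by
  set M : ℝ := max (1 + nsq l) (max (1 + nsq m) (1 + nsq n)) with hM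
  have hMpos : 0 < M := lt_of_lt_of_le (base_pos l) (le_max_left _ _)
  have hb : 1 + nsq (l + m + n) ≤ 9 * M := by
    have h3 := nsq_add3 l m n
    have h1 : 1 + nsq l ≤ M := le_max_left _ _
    have h2 : 1 + nsq m ≤ M := le_trans (le_max_left _ _) (le_max_right _ _)
    have h4 : 1 + nsq n ≤ M := le_trans (le_max_right _ _) (le_max_right _ _)
    linarith
  have step1 : pw d (s / 2) (l + m + n) ≤ (9 * M) ^ (s / 2) :=
    Real.rpow_le_rpow (base_pos _).le hb (by linarith)
  have h9 : ((9 : ℝ) * M) ^ (s / 2) = 3 ^ s * M ^ (s / 2) := by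
    rw [Real.mul_rpow (by norm_num) hMpos.le]
    congr 1
    rw [show (9 : ℝ) = 3 ^ (2 : ℕ) by norm_num, ← Real.rpow_natCast (3 : ℝ) 2,
      ← Real.rpow_mul (by norm_num)]
    norm_num
    ring_nf
  have hMle : M ^ (s / 2) ≤ pw d (s / 2) l + pw d (s / 2) m + pw d (s / 2) n := by
    have := rpow_max_le_3 (s := s / 2) (by linarith) _ _ _ (base_pos l) (base_pos m) (base_pos n)
    simpa [pw, hM] using this
  calc pw d (s / 2) (l + m + n) ≤ (9 * M) ^ (s / 2) := step1
    _ = 3 ^ s * M ^ (s / 2) := h9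
    _ ≤ 3 ^ s * (pw d (s / 2) l + pw d (s / 2) m + pw d (s / 2) n) := by
        have h3s : (0:ℝ) ≤ 3 ^ s := le_of_lt (Real.rpow_pos_of_pos (by norm_num) s)
        exact mul_le_mul_of_nonneg_left hMle h3s

open scoped ENNReal

/-- ENNReal weight -/
def Pw (d : ℕ) (t : ℝ) (k : Fin d → ℤ) : ℝ≥0∞ := ENNReal.ofReal (pw d t k)

/-- ENNReal convolution -/
def eConv {d : ℕ} (A B : (Fin d → ℤ) → ℝ≥0∞) : (Fin d → ℤ) → ℝ≥0∞ :=
  fun k => ∑' l, A l * B (k - l)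

/-- norms of a complex sequence, in ENNReal -/
def eA {d : ℕ} (a : TSeq d) : (Fin d → ℤ) → ℝ≥0∞ := fun k => (‖a k‖₊ : ℝ≥0∞)

def eN1 {d : ℕ} (A : (Fin d → ℤ) → ℝ≥0∞) : ℝ≥0∞ := ∑' k, A k

def eN2 (d : ℕ) (t : ℝ) (A : (Fin d → ℤ) → ℝ≥0∞) : ℝ≥0∞ := ∑' k, Pw d t k * A k ^ 2

lemma Pw_mul (t u : ℝ) (k : Fin d → ℤ) : Pw d t k * Pw d u k = Pw d (t + u) k := by
  rw [Pw, Pw, Pw, pw_add, ENNReal.ofReal_mul (pw_nonneg t k)]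

lemma Pw_sq (t : ℝ) (k : Fin d → ℤ) : Pw d t k ^ 2 = Pw d (2 * t) k := by
  rw [Pw, Pw, ← ENNReal.ofReal_pow (pw_nonneg t k), pw_sq]

lemma Pw_cancel (t : ℝ) (k : Fin d → ℤ) : Pw d (-t) k * Pw d t k = 1 := by
  rw [Pw_mul, neg_add_cancel, Pw, pw_zero, ENNReal.ofReal_one]

lemma Pw_ne_top (t : ℝ) (k : Fin d → ℤ) : Pw d t k ≠ ⊤ := ENNReal.ofReal_ne_top

lemma Pw_neg' (t : ℝ) (k : Fin d → ℤ) : Pw d t (-k) = Pw d t k := by rw [Pw, Pw, pw_neg']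

/-- Cauchy–Schwarz for ENNReal tsums -/
lemma ecs {G : Type*} [Countable G] (f g : G → ℝ≥0∞) :
    (∑' k, f k * g k) ^ 2 ≤ (∑' k, f k ^ 2) * (∑' k, g k ^ 2) := by
  let _ : MeasurableSpace G := ⊤
  have _ : MeasurableSingletonClass G := ⟨fun _ => trivial⟩
  have hpq : Real.HolderConjugate 2 2 := Real.HolderConjugate.two_two
  have h := ENNReal.lintegral_mul_le_Lp_mul_Lq (μ := MeasureTheory.Measure.count (α := G)) hpq
    (measurable_of_countable f).aemeasurable (measurable_of_countable g).aemeasurable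
  simp only [MeasureTheory.lintegral_count, Pi.mul_apply] at h
  have h2 : ∀ F : G → ℝ≥0∞, (∑' k, F k ^ (2 : ℝ)) = ∑' k, F k ^ 2 := by
    intro F; congr 1; ext k; rw [← ENNReal.rpow_natCast (F k) 2]; norm_num
  rw [h2 f, h2 g] at h
  calc (∑' k, f k * g k) ^ 2
      ≤ ((∑' k, f k ^ 2) ^ (1 / (2 : ℝ)) * (∑' k, g k ^ 2) ^ (1 / (2 : ℝ))) ^ 2 :=
        pow_le_pow_left' h 2
    _ = (∑' k, f k ^ 2) * (∑' k, g k ^ 2) := by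
        rw [mul_pow, ← ENNReal.rpow_natCast (_ ^ (1 / (2 : ℝ))) 2,
          ← ENNReal.rpow_natCast (_ ^ (1 / (2 : ℝ))) 2, ← ENNReal.rpow_mul, ← ENNReal.rpow_mul]
        norm_num

lemma eConv_comm (A B : (Fin d → ℤ) → ℝ≥0∞) : eConv A B = eConv B A := by
  funext k
  rw [eConv, eConv, ← (Equiv.subLeft k).tsum_eq (fun l => B l * A (k - l))]
  simp only [Equiv.subLeft_apply]
  refine tsum_congr fun l => ?_
  have h : k - (k - l) = l := by abel
  rw [h, mul_comm]

lemma eConv_mono {A A' B B' : (Fin d → ℤ) → ℝ≥0∞} (hA : ∀ k, A k ≤ A' k)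
    (hB : ∀ k, B k ≤ B' k) : ∀ k, eConv A B k ≤ eConv A' B' k := fun k =>
  ENNReal.tsum_le_tsum fun l => mul_le_mul' (hA l) (hB (k - l))

lemma eN1_eConv (A B : (Fin d → ℤ) → ℝ≥0∞) : eN1 (eConv A B) = eN1 A * eN1 B := by
  have h0 : eN1 (eConv A B) = ∑' k, ∑' l, A l * B (k - l) := rfl
  rw [h0, ENNReal.tsum_comm]
  calc (∑' l, ∑' k, A l * B (k - l))
      = ∑' l, A l * ∑' k, B (k - l) := by
        exact tsum_congr fun l => ENNReal.tsum_mul_left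
    _ = ∑' l, A l * eN1 B := by
        refine tsum_congr fun l => ?_
        congr 1
        exact (Equiv.subRight l).tsum_eq B
    _ = eN1 A * eN1 B := ENNReal.tsum_mul_right

lemma eConv_assoc (A B C : (Fin d → ℤ) → ℝ≥0∞) : eConv (eConv A B) C = eConv A (eConv B C) := by
  funext k
  calc eConv (eConv A B) C k
      = ∑' l, ∑' m, A m * B (l - m) * C (k - l) := by
        exact tsum_congr fun l => (ENNReal.tsum_mul_right (f := fun m => A m * B (l - m))).symm
    _ = ∑' m, ∑' l, A m * B (l - m) * C (k - l) := ENNReal.tsum_comm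
    _ = ∑' m, ∑' j, A m * B j * C (k - (m + j)) := by
        refine tsum_congr fun m => ?_
        rw [← (Equiv.addLeft m).tsum_eq (fun l => A m * B (l - m) * C (k - l))]
        simp [add_sub_cancel_left]
    _ = ∑' m, A m * eConv B C (k - m) := by
        refine tsum_congr fun m => ?_
        rw [show eConv B C (k - m) = ∑' j, B j * C ((k - m) - j) from rfl, ← ENNReal.tsum_mul_left]
        exact tsum_congr fun j => by rw [mul_assoc, sub_sub]
    _ = eConv A (eConv B C) k := rfl

lemma eConv_rot (A B C : (Fin d → ℤ) → ℝ≥0∞) : eConv (eConv A B) C = eConv (eConv C B) A := by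
  rw [eConv_assoc, eConv_comm, eConv_comm B C]

lemma eConv_swap23 (A B C : (Fin d → ℤ) → ℝ≥0∞) : eConv (eConv A B) C = eConv (eConv A C) B := by
  rw [eConv_assoc, eConv_comm B C, ← eConv_assoc]

lemma sqe_mul (x : ℝ≥0∞) : x ^ (1/2 : ℝ) * x ^ (1/2 : ℝ) = x := by
  rw [← sq, ← ENNReal.rpow_natCast (x ^ (1/2:ℝ)) 2, ← ENNReal.rpow_mul]
  norm_num

lemma sqe_sq (x : ℝ≥0∞) : (x ^ (1/2 : ℝ)) ^ 2 = x := by rw [sq, sqe_mul]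

lemma eConv_le (A B : (Fin d → ℤ) → ℝ≥0∞) (k : Fin d → ℤ) : eConv A B k ≤ eN1 A * eN1 B := by
  calc eConv A B k ≤ ∑' l, A l * eN1 B :=
        ENNReal.tsum_le_tsum fun l => mul_le_mul' le_rfl (ENNReal.le_tsum _)
    _ = eN1 A * eN1 B := ENNReal.tsum_mul_right

/-- Young: `‖P ⋆ Q‖₂² ≤ ‖P‖₂² ‖Q‖₁²` -/
lemma young (P Q : (Fin d → ℤ) → ℝ≥0∞) :
    (∑' k, eConv P Q k ^ 2) ≤ (∑' k, P k ^ 2) * eN1 Q ^ 2 := by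
  have hcs : ∀ k, eConv P Q k ^ 2 ≤ (∑' l, P (k - l) ^ 2 * Q l) * eN1 Q := by
    intro k
    have hform : eConv P Q k = ∑' l, (P (k - l) * Q l ^ (1/2 : ℝ)) * Q l ^ (1/2 : ℝ) := by
      rw [eConv_comm]
      exact tsum_congr fun l => by rw [mul_assoc, sqe_mul, mul_comm]
    calc eConv P Q k ^ 2
        ≤ (∑' l, (P (k - l) * Q l ^ (1/2 : ℝ)) ^ 2) * (∑' l, (Q l ^ (1/2 : ℝ)) ^ 2) := by
          rw [hform]; exact ecs _ _
      _ = (∑' l, P (k - l) ^ 2 * Q l) * eN1 Q := by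
          congr 1
          · exact tsum_congr fun l => by rw [mul_pow, sqe_sq]
          · exact tsum_congr fun l => sqe_sq _
  calc (∑' k, eConv P Q k ^ 2)
      ≤ ∑' k, (∑' l, P (k - l) ^ 2 * Q l) * eN1 Q := ENNReal.tsum_le_tsum hcs
    _ = (∑' k, ∑' l, P (k - l) ^ 2 * Q l) * eN1 Q := ENNReal.tsum_mul_right
    _ = (∑' l, ∑' k, P (k - l) ^ 2 * Q l) * eN1 Q := by rw [ENNReal.tsum_comm]
    _ = (∑' l, (∑' k, P k ^ 2) * Q l) * eN1 Q := by
        congr 1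
        refine tsum_congr fun l => ?_
        rw [← ENNReal.tsum_mul_right]
        exact (Equiv.subRight l).tsum_eq (fun k => P k ^ 2 * Q l)
    _ = (∑' k, P k ^ 2) * eN1 Q ^ 2 := by
        rw [ENNReal.tsum_mul_left]; simp only [eN1]; ring

/-- weighted Schur-type bound -/
lemma schur (u v F G : (Fin d → ℤ) → ℝ≥0∞) (M : ℝ≥0∞)
    (hk : ∀ k, (∑' l, u l ^ 2 * v (k - l) ^ 2) ≤ M) :
    (∑' k, eConv (fun l => u l * F l) (fun l => v l * G l) k ^ 2) ≤
      M * ((∑' k, F k ^ 2) * (∑' k, G k ^ 2)) := by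
  have hcs : ∀ k, eConv (fun l => u l * F l) (fun l => v l * G l) k ^ 2 ≤
      M * eConv (fun l => F l ^ 2) (fun l => G l ^ 2) k := by
    intro k
    have hform : eConv (fun l => u l * F l) (fun l => v l * G l) k =
        ∑' l, (u l * v (k - l)) * (F l * G (k - l)) :=
      tsum_congr fun l => by ring
    calc eConv (fun l => u l * F l) (fun l => v l * G l) k ^ 2
        ≤ (∑' l, (u l * v (k - l)) ^ 2) * (∑' l, (F l * G (k - l)) ^ 2) := by
          rw [hform]; exact ecs _ _
      _ ≤ M * eConv (fun l => F l ^ 2) (fun l => G l ^ 2) k := by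
          refine mul_le_mul' ?_ ?_
          · refine le_trans (le_of_eq ?_) (hk k)
            exact tsum_congr fun l => by rw [mul_pow]
          · exact le_of_eq (tsum_congr fun l => by rw [mul_pow])
  calc (∑' k, eConv (fun l => u l * F l) (fun l => v l * G l) k ^ 2)
      ≤ ∑' k, M * eConv (fun l => F l ^ 2) (fun l => G l ^ 2) k := ENNReal.tsum_le_tsum hcs
    _ = M * eN1 (eConv (fun l => F l ^ 2) (fun l => G l ^ 2)) := ENNReal.tsum_mul_left
    _ = M * ((∑' k, F k ^ 2) * (∑' k, G k ^ 2)) := by rw [eN1_eConv]; rfl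

lemma summable_one_dim {p : ℝ} (hp : 1 / 2 < p) :
    Summable (fun n : ℤ => (1 + (n : ℝ) ^ 2) ^ (-p)) := by
  have h2p : 1 < 2 * p := by linarith
  have hg : Summable (fun n : ℤ => |(n : ℝ)| ^ (-(2 * p))) := Real.summable_abs_int_rpow h2p
  have hδ : Summable (fun n : ℤ => if n = 0 then (1 : ℝ) else 0) := by
    refine summable_of_ne_finset_zero (s := {0}) fun n hn => ?_
    simp only [Finset.mem_singleton] at hn
    simp [hn]
  refine Summable.of_nonneg_of_le (fun n => Real.rpow_nonneg (by positivity) _)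
    (fun n => ?_) (hg.add hδ)
  by_cases h : n = 0
  · subst h
    simp only [Int.cast_zero, ne_eq, abs_zero]
    rw [Real.zero_rpow (show -(2*p) ≠ 0 by intro hc; nlinarith)]
    simp
  · have hn0 : ((n : ℝ)) ≠ 0 := Int.cast_ne_zero.mpr h
    have h0 : (0 : ℝ) < (n : ℝ) ^ 2 := by positivity
    have hle : (1 + (n : ℝ) ^ 2) ^ (-p) ≤ ((n : ℝ) ^ 2) ^ (-p) :=
      Real.rpow_le_rpow_of_nonpos h0 (by linarith) (by linarith)
    have heq : ((n : ℝ) ^ 2) ^ (-p) = |(n : ℝ)| ^ (-(2 * p)) := by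
      rw [← _root_.sq_abs, ← Real.rpow_natCast |(n : ℝ)| 2, ← Real.rpow_mul (abs_nonneg _)]
      norm_num
    rw [if_neg h]
    linarith [hle, heq.le, heq.ge]

lemma summable_prod_dims {p : ℝ} (hp : 1 / 2 < p) :
    ∀ m : ℕ, Summable (fun k : Fin m → ℤ => ∏ i, (1 + ((k i : ℝ)) ^ 2) ^ (-p)) := by
  intro m
  induction m with
  | zero =>
      simp only [Finset.univ_eq_empty, Finset.prod_empty]
      exact Summable.of_finite
  | succ n ih =>
      have key := Summable.mul_of_nonneg (summable_one_dim hp) ih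
        (fun _ => Real.rpow_nonneg (by positivity) _)
        (fun _ => Finset.prod_nonneg fun i _ => Real.rpow_nonneg (by positivity) _)
      set e := Fin.consEquiv (fun _ : Fin (n + 1) => ℤ)
      refine (e.summable_iff
        (f := fun k : Fin (n + 1) → ℤ => ∏ i, (1 + ((k i : ℝ)) ^ 2) ^ (-p))).mp ?_
      refine key.congr fun x => ?_
      show _ = ∏ i, (1 + ((e x i : ℝ)) ^ 2) ^ (-p)
      rw [Fin.prod_univ_succ]
      simp only [e, Fin.consEquiv_apply, Fin.cons_zero,
        Fin.cons_succ]

lemma summable_pw_neg_sigma {σ : ℝ} (hd : 1 ≤ d) (hσ : (d : ℝ) / 2 < σ) :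
    Summable (fun k : Fin d → ℤ => pw d (-σ) k) := by
  have hd0 : (0 : ℝ) < (d : ℝ) := by exact_mod_cast hd
  set p := σ / d with hpdef
  have hp : 1 / 2 < p := by rw [hpdef, lt_div_iff₀ hd0]; linarith [hσ]
  refine Summable.of_nonneg_of_le (fun k => pw_nonneg _ _) (fun k => ?_) (summable_prod_dims hp d)
  have hterm : ∀ i : Fin d, (1 + ((k i : ℝ)) ^ 2) ≤ 1 + nsq k := by
    intro i
    have : ((k i : ℝ)) ^ 2 ≤ nsq k :=
      Finset.single_le_sum (f := fun j => ((k j : ℝ)) ^ 2) (fun j _ => sq_nonneg _)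
        (Finset.mem_univ i)
    linarith
  have hprod : ∏ i, (1 + ((k i : ℝ)) ^ 2) ≤ (1 + nsq k) ^ (d : ℕ) := by
    calc ∏ i, (1 + ((k i : ℝ)) ^ 2) ≤ ∏ _i : Fin d, (1 + nsq k) :=
          Finset.prod_le_prod (fun i _ => by positivity) (fun i _ => hterm i)
      _ = (1 + nsq k) ^ (d : ℕ) := by rw [Finset.prod_const, Finset.card_univ, Fintype.card_fin]
  have hprodpos : (0 : ℝ) < ∏ i, (1 + ((k i : ℝ)) ^ 2) :=
    Finset.prod_pos fun i _ => by positivity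
  calc pw d (-σ) k = ((1 + nsq k) ^ (d : ℕ)) ^ (-p) := by
        rw [pw, ← Real.rpow_natCast (1 + nsq k) d, ← Real.rpow_mul (base_pos k).le]
        congr 1
        rw [hpdef]; field_simp
    _ ≤ (∏ i, (1 + ((k i : ℝ)) ^ 2)) ^ (-p) :=
        Real.rpow_le_rpow_of_nonpos hprodpos hprod (by linarith)
    _ = ∏ i, (1 + ((k i : ℝ)) ^ 2) ^ (-p) :=
        (Real.finset_prod_rpow Finset.univ _ (fun i _ => by positivity) (-p)).symm

lemma ofReal_tsum_pw (t : ℝ) (hsum : Summable (fun k : Fin d → ℤ => pw d t k)) :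
    (∑' k, Pw d t k) = ENNReal.ofReal (∑' k, pw d t k) :=
  (ENNReal.ofReal_tsum_of_nonneg (fun k => pw_nonneg _ _) hsum).symm

lemma kernel_bound {s σ : ℝ} (hs : 0 ≤ s) (hsσ : s ≤ σ)
    (hsum : Summable (fun k : Fin d → ℤ => pw d (-σ) k)) (k : Fin d → ℤ) :
    (∑' l, Pw d (-(s/2)) l ^ 2 * Pw d ((s - σ)/2) (k - l) ^ 2) ≤
      ENNReal.ofReal (2 * ∑' j, pw d (-σ) j) := by
  have hpt : ∀ l, Pw d (-(s/2)) l ^ 2 * Pw d ((s - σ)/2) (k - l) ^ 2 ≤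
      Pw d (-σ) l + Pw d (-σ) (k - l) := by
    intro l
    rw [Pw_sq, Pw_sq, show (2:ℝ) * (-(s/2)) = -s by ring, show (2:ℝ) * ((s - σ)/2) = s - σ by ring]
    rw [Pw, Pw, Pw, Pw, ← ENNReal.ofReal_mul (pw_nonneg _ _),
      ← ENNReal.ofReal_add (pw_nonneg _ _) (pw_nonneg _ _)]
    apply ENNReal.ofReal_le_ofReal
    rcases le_total (1 + nsq l) (1 + nsq (k - l)) with h | h
    · have hy : pw d (s - σ) (k - l) ≤ pw d (s - σ) l :=
        Real.rpow_le_rpow_of_nonpos (base_pos l) h (by linarith)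
      have h2 : pw d (-s) l * pw d (s - σ) (k - l) ≤ pw d (-s) l * pw d (s - σ) l :=
        mul_le_mul_of_nonneg_left hy (pw_nonneg _ _)
      have h3 : pw d (-s) l * pw d (s - σ) l = pw d (-σ) l := by
        rw [← pw_add, show -s + (s - σ) = -σ by ring]
      have h4 := pw_nonneg (d := d) (-σ) (k - l)
      linarith
    · have hy : pw d (-s) l ≤ pw d (-s) (k - l) :=
        Real.rpow_le_rpow_of_nonpos (base_pos (k - l)) h (by linarith)
      have h2 : pw d (-s) l * pw d (s - σ) (k - l) ≤ pw d (-s) (k - l) * pw d (s - σ) (k - l) :=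
        mul_le_mul_of_nonneg_right hy (pw_nonneg _ _)
      have h3 : pw d (-s) (k - l) * pw d (s - σ) (k - l) = pw d (-σ) (k - l) := by
        rw [← pw_add, show -s + (s - σ) = -σ by ring]
      have h4 := pw_nonneg (d := d) (-σ) l
      linarith
  calc (∑' l, Pw d (-(s/2)) l ^ 2 * Pw d ((s - σ)/2) (k - l) ^ 2)
      ≤ ∑' l, (Pw d (-σ) l + Pw d (-σ) (k - l)) := ENNReal.tsum_le_tsum hpt
    _ = (∑' l, Pw d (-σ) l) + ∑' l, Pw d (-σ) (k - l) := ENNReal.tsum_add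
    _ = (∑' l, Pw d (-σ) l) + ∑' l, Pw d (-σ) l := by
        congr 1
        exact (Equiv.subLeft k).tsum_eq (fun l => Pw d (-σ) l)
    _ = ENNReal.ofReal (2 * ∑' j, pw d (-σ) j) := by
        rw [ofReal_tsum_pw _ hsum, two_mul,
          ENNReal.ofReal_add (tsum_nonneg fun _ => pw_nonneg _ _)
            (tsum_nonneg fun _ => pw_nonneg _ _)]

lemma eN1_sq_le {σ : ℝ} (hsum : Summable (fun k : Fin d → ℤ => pw d (-σ) k))
    (A : (Fin d → ℤ) → ℝ≥0∞) :
    eN1 A ^ 2 ≤ ENNReal.ofReal (∑' j, pw d (-σ) j) * eN2 d σ A := by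
  have h1 : eN1 A = ∑' k, Pw d (-(σ/2)) k * (Pw d (σ/2) k * A k) := by
    refine tsum_congr fun k => ?_
    rw [← mul_assoc, Pw_cancel, one_mul]
  rw [h1]
  calc (∑' k, Pw d (-(σ/2)) k * (Pw d (σ/2) k * A k)) ^ 2
      ≤ (∑' k, Pw d (-(σ/2)) k ^ 2) * (∑' k, (Pw d (σ/2) k * A k) ^ 2) := ecs _ _
    _ = ENNReal.ofReal (∑' j, pw d (-σ) j) * eN2 d σ A := by
        congr 1
        · rw [← ofReal_tsum_pw _ hsum]
          refine tsum_congr fun k => ?_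
          rw [Pw_sq, show (2:ℝ) * (-(σ/2)) = -σ by ring]
        · refine tsum_congr fun k => ?_
          rw [mul_pow, Pw_sq, show (2:ℝ) * (σ/2) = σ by ring]

lemma enn_add3_sq (a b c : ℝ≥0∞) : (a + b + c) ^ 2 ≤ 9 * (a ^ 2 + b ^ 2 + c ^ 2) := by
  set M := max a (max b c) with hM
  have h1 : a + b + c ≤ 3 * M := by
    have ha : a ≤ M := le_max_left _ _
    have hb : b ≤ M := le_trans (le_max_left _ _) (le_max_right _ _)
    have hc : c ≤ M := le_trans (le_max_right _ _) (le_max_right _ _)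
    calc a + b + c ≤ M + M + M := by gcongr
      _ = 3 * M := by ring
  have ha : a ^ 2 ≤ a ^ 2 + b ^ 2 + c ^ 2 :=
    le_trans (self_le_add_right _ _) (self_le_add_right _ _)
  have hb : b ^ 2 ≤ a ^ 2 + b ^ 2 + c ^ 2 :=
    le_trans (self_le_add_left _ _) (self_le_add_right _ _)
  have hc : c ^ 2 ≤ a ^ 2 + b ^ 2 + c ^ 2 := self_le_add_left _ _
  have h2 : M ^ 2 ≤ a ^ 2 + b ^ 2 + c ^ 2 := by
    rcases max_choice b c with h | h <;> rcases max_choice a (max b c) with h' | h' <;>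
      rw [hM, h'] <;> try rw [h]
    all_goals first | exact ha | exact hb | exact hc
  calc (a + b + c) ^ 2 ≤ (3 * M) ^ 2 := pow_le_pow_left' h1 2
    _ = 9 * M ^ 2 := by ring
    _ ≤ 9 * (a ^ 2 + b ^ 2 + c ^ 2) := mul_le_mul' le_rfl h2

/-- pointwise Peetre bound for the triple convolution -/
lemma peetre_conv {s : ℝ} (hs : 0 ≤ s) (A B C : (Fin d → ℤ) → ℝ≥0∞) (k : Fin d → ℤ) :
    Pw d (s/2) k * eConv (eConv A B) C k ≤
      ENNReal.ofReal (3 ^ s) *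
        (eConv (eConv (fun l => Pw d (s/2) l * A l) B) C k +
         (eConv (eConv A (fun l => Pw d (s/2) l * B l)) C k +
          eConv (eConv A B) (fun l => Pw d (s/2) l * C l) k)) := by
  have hexp : ∀ X Y Z : (Fin d → ℤ) → ℝ≥0∞,
      eConv (eConv X Y) Z k = ∑' l, ∑' m, X m * Y (l - m) * Z (k - l) :=
    fun X Y Z => tsum_congr fun l => (ENNReal.tsum_mul_right (f := fun m => X m * Y (l - m))).symm
  have hPee : ∀ l m : Fin d → ℤ,
      Pw d (s/2) k ≤ ENNReal.ofReal (3 ^ s) *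
        (Pw d (s/2) m + Pw d (s/2) (l - m) + Pw d (s/2) (k - l)) := by
    intro l m
    have hk : k = m + (l - m) + (k - l) := by abel
    conv_lhs => rw [hk]
    rw [Pw, Pw, Pw, Pw]
    calc ENNReal.ofReal (pw d (s/2) (m + (l - m) + (k - l)))
        ≤ ENNReal.ofReal (3 ^ s * (pw d (s/2) m + pw d (s/2) (l - m) + pw d (s/2) (k - l))) :=
          ENNReal.ofReal_le_ofReal (peetre3 hs _ _ _)
      _ = _ := by
          rw [ENNReal.ofReal_mul (by positivity),
            ENNReal.ofReal_add (add_nonneg (pw_nonneg _ _) (pw_nonneg _ _)) (pw_nonneg _ _),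
            ENNReal.ofReal_add (pw_nonneg _ _) (pw_nonneg _ _)]
  calc Pw d (s/2) k * eConv (eConv A B) C k
      = ∑' l, ∑' m, Pw d (s/2) k * (A m * B (l - m) * C (k - l)) := by
        rw [hexp, ← ENNReal.tsum_mul_left]
        exact tsum_congr fun l => (ENNReal.tsum_mul_left).symm
    _ ≤ ∑' l, ∑' m, ENNReal.ofReal (3 ^ s) *
          ((Pw d (s/2) m * A m) * B (l - m) * C (k - l) +
           (A m * (Pw d (s/2) (l - m) * B (l - m)) * C (k - l) +
            A m * B (l - m) * (Pw d (s/2) (k - l) * C (k - l)))) := by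
        refine ENNReal.tsum_le_tsum fun l => ENNReal.tsum_le_tsum fun m => ?_
        calc Pw d (s/2) k * (A m * B (l - m) * C (k - l))
            ≤ (ENNReal.ofReal (3 ^ s) *
                (Pw d (s/2) m + Pw d (s/2) (l - m) + Pw d (s/2) (k - l))) *
              (A m * B (l - m) * C (k - l)) := mul_le_mul' (hPee l m) le_rfl
          _ = _ := by ring
    _ = _ := by
        simp only [ENNReal.tsum_mul_left, ENNReal.tsum_add]
        rw [hexp (fun l => Pw d (s/2) l * A l) B C,
          hexp A (fun l => Pw d (s/2) l * B l) C,
          hexp A B (fun l => Pw d (s/2) l * C l)]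

/-- **Key trilinear estimate** in `ℝ≥0∞`. -/
lemma key {s σ : ℝ} (hs : 0 ≤ s) (hsσ : s ≤ σ)
    (hsum : Summable (fun k : Fin d → ℤ => pw d (-σ) k)) :
    ∃ K : ℝ, 0 ≤ K ∧ ∀ A B C : (Fin d → ℤ) → ℝ≥0∞,
      (∑' k, Pw d s k * eConv (eConv A B) C k ^ 2) ≤
        ENNReal.ofReal K * (eN2 d s A * (eN2 d σ B * eN2 d σ C)) := by
  set CS : ℝ := ∑' j, pw d (-σ) j with hCS
  have hCS0 : 0 ≤ CS := tsum_nonneg fun _ => pw_nonneg _ _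
  refine ⟨9 ^ s * 9 * 3 * (2 * CS ^ 2), by positivity, fun A B C => ?_⟩
  set A' : (Fin d → ℤ) → ℝ≥0∞ := fun l => Pw d (s/2) l * A l with hA'
  set B' : (Fin d → ℤ) → ℝ≥0∞ := fun l => Pw d (s/2) l * B l with hB'
  set C' : (Fin d → ℤ) → ℝ≥0∞ := fun l => Pw d (s/2) l * C l with hC'
  -- the three pieces
  have hsqA' : (∑' k, A' k ^ 2) = eN2 d s A := by
    refine tsum_congr fun k => ?_
    rw [hA', mul_pow, Pw_sq, show (2:ℝ) * (s/2) = s by ring]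
  have hN1B : eN1 B ^ 2 ≤ ENNReal.ofReal CS * eN2 d σ B := eN1_sq_le hsum B
  have hN1C : eN1 C ^ 2 ≤ ENNReal.ofReal CS * eN2 d σ C := eN1_sq_le hsum C
  have hXA : (∑' k, eConv (eConv A' B) C k ^ 2) ≤
      ENNReal.ofReal (2 * CS ^ 2) * (eN2 d s A * (eN2 d σ B * eN2 d σ C)) := by
    calc (∑' k, eConv (eConv A' B) C k ^ 2)
        ≤ (∑' k, eConv A' B k ^ 2) * eN1 C ^ 2 := young _ _
      _ ≤ ((∑' k, A' k ^ 2) * eN1 B ^ 2) * eN1 C ^ 2 :=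
          mul_le_mul' (young _ _) le_rfl
      _ ≤ (eN2 d s A * (ENNReal.ofReal CS * eN2 d σ B)) *
            (ENNReal.ofReal CS * eN2 d σ C) := by
          rw [hsqA']; exact mul_le_mul' (mul_le_mul' le_rfl hN1B) hN1C
      _ = (ENNReal.ofReal CS * ENNReal.ofReal CS) *
            (eN2 d s A * (eN2 d σ B * eN2 d σ C)) := by ring
      _ ≤ ENNReal.ofReal (2 * CS ^ 2) * (eN2 d s A * (eN2 d σ B * eN2 d σ C)) := by
          refine mul_le_mul' ?_ le_rfl
          rw [← ENNReal.ofReal_mul hCS0]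
          exact ENNReal.ofReal_le_ofReal (by nlinarith)
  -- Schur bound for a pair (A, weighted X)
  have hschur : ∀ X : (Fin d → ℤ) → ℝ≥0∞,
      (∑' k, eConv A (fun l => Pw d (s/2) l * X l) k ^ 2) ≤
        ENNReal.ofReal (2 * CS) * (eN2 d s A * eN2 d σ X) := by
    intro X
    have hrepr : eConv A (fun l => Pw d (s/2) l * X l) =
        eConv (fun l => Pw d (-(s/2)) l * (Pw d (s/2) l * A l))
          (fun l => Pw d ((s - σ)/2) l * (Pw d (σ/2) l * X l)) := by
      funext k
      refine tsum_congr fun l => ?_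
      show A l * (Pw d (s/2) (k - l) * X (k - l)) =
        (Pw d (-(s/2)) l * (Pw d (s/2) l * A l)) *
          (Pw d ((s - σ)/2) (k - l) * (Pw d (σ/2) (k - l) * X (k - l)))
      rw [← mul_assoc (Pw d (-(s/2)) l), Pw_cancel, one_mul,
        ← mul_assoc (Pw d ((s - σ)/2) (k - l)), Pw_mul,
        show (s - σ)/2 + σ/2 = s/2 by ring]
    rw [hrepr]
    have := schur (fun l => Pw d (-(s/2)) l) (fun l => Pw d ((s - σ)/2) l)
      (fun l => Pw d (s/2) l * A l) (fun l => Pw d (σ/2) l * X l)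
      (ENNReal.ofReal (2 * CS)) (fun k => kernel_bound hs hsσ hsum k)
    refine le_trans this (le_of_eq ?_)
    have e1 : (∑' k, (Pw d (s/2) k * A k) ^ 2) = eN2 d s A := by
      exact tsum_congr fun k => by rw [mul_pow, Pw_sq, show (2:ℝ) * (s/2) = s by ring]
    have e2 : (∑' k, (Pw d (σ/2) k * X k) ^ 2) = eN2 d σ X := by
      exact tsum_congr fun k => by rw [mul_pow, Pw_sq, show (2:ℝ) * (σ/2) = σ by ring]
    rw [e1, e2]
  have hXB : (∑' k, eConv (eConv A B') C k ^ 2) ≤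
      ENNReal.ofReal (2 * CS ^ 2) * (eN2 d s A * (eN2 d σ B * eN2 d σ C)) := by
    calc (∑' k, eConv (eConv A B') C k ^ 2)
        ≤ (∑' k, eConv A B' k ^ 2) * eN1 C ^ 2 := young _ _
      _ ≤ (ENNReal.ofReal (2 * CS) * (eN2 d s A * eN2 d σ B)) *
            (ENNReal.ofReal CS * eN2 d σ C) := mul_le_mul' (hschur B) hN1C
      _ = (ENNReal.ofReal (2 * CS) * ENNReal.ofReal CS) *
            (eN2 d s A * (eN2 d σ B * eN2 d σ C)) := by ring
      _ ≤ ENNReal.ofReal (2 * CS ^ 2) * (eN2 d s A * (eN2 d σ B * eN2 d σ C)) := by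
          refine mul_le_mul' ?_ le_rfl
          rw [← ENNReal.ofReal_mul (by positivity)]
          exact ENNReal.ofReal_le_ofReal (by nlinarith)
  have hXC : (∑' k, eConv (eConv A B) C' k ^ 2) ≤
      ENNReal.ofReal (2 * CS ^ 2) * (eN2 d s A * (eN2 d σ B * eN2 d σ C)) := by
    calc (∑' k, eConv (eConv A B) C' k ^ 2)
        = ∑' k, eConv (eConv A C') B k ^ 2 := by rw [eConv_swap23]
      _ ≤ (∑' k, eConv A C' k ^ 2) * eN1 B ^ 2 := young _ _
      _ ≤ (ENNReal.ofReal (2 * CS) * (eN2 d s A * eN2 d σ C)) *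
            (ENNReal.ofReal CS * eN2 d σ B) := mul_le_mul' (hschur C) hN1B
      _ = (ENNReal.ofReal (2 * CS) * ENNReal.ofReal CS) *
            (eN2 d s A * (eN2 d σ B * eN2 d σ C)) := by ring
      _ ≤ ENNReal.ofReal (2 * CS ^ 2) * (eN2 d s A * (eN2 d σ B * eN2 d σ C)) := by
          refine mul_le_mul' ?_ le_rfl
          rw [← ENNReal.ofReal_mul (by positivity)]
          exact ENNReal.ofReal_le_ofReal (by nlinarith)
  -- assemble
  have h9s : ENNReal.ofReal (3 ^ s) ^ 2 = ENNReal.ofReal (9 ^ s) := by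
    rw [← ENNReal.ofReal_pow (by positivity)]
    congr 1
    rw [← Real.rpow_natCast ((3:ℝ) ^ s) 2, ← Real.rpow_mul (by norm_num),
      show (9:ℝ) = 3 ^ (2:ℕ) by norm_num, ← Real.rpow_natCast (3:ℝ) 2,
      ← Real.rpow_mul (by norm_num)]
    norm_num
    ring_nf
  calc (∑' k, Pw d s k * eConv (eConv A B) C k ^ 2)
      = ∑' k, (Pw d (s/2) k * eConv (eConv A B) C k) ^ 2 := by
        refine tsum_congr fun k => ?_
        rw [mul_pow, Pw_sq, show (2:ℝ) * (s/2) = s by ring]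
    _ ≤ ∑' k, (ENNReal.ofReal (3 ^ s) *
          (eConv (eConv A' B) C k + (eConv (eConv A B') C k + eConv (eConv A B) C' k))) ^ 2 := by
        refine ENNReal.tsum_le_tsum fun k => pow_le_pow_left' ?_ 2
        have := peetre_conv hs A B C k
        simpa [hA', hB', hC'] using this
    _ = ENNReal.ofReal (9 ^ s) * ∑' k,
          (eConv (eConv A' B) C k + (eConv (eConv A B') C k + eConv (eConv A B) C' k)) ^ 2 := by
        rw [← h9s, ← ENNReal.tsum_mul_left]
        exact tsum_congr fun k => by rw [mul_pow]
    _ ≤ ENNReal.ofReal (9 ^ s) * ∑' k, 9 *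
          (eConv (eConv A' B) C k ^ 2 +
            (eConv (eConv A B') C k ^ 2 + eConv (eConv A B) C' k ^ 2)) := by
        refine mul_le_mul' le_rfl (ENNReal.tsum_le_tsum fun k => ?_)
        have := enn_add3_sq (eConv (eConv A' B) C k) (eConv (eConv A B') C k)
          (eConv (eConv A B) C' k)
        calc (eConv (eConv A' B) C k + (eConv (eConv A B') C k + eConv (eConv A B) C' k)) ^ 2
            = (eConv (eConv A' B) C k + eConv (eConv A B') C k + eConv (eConv A B) C' k) ^ 2 := by
              rw [add_assoc]
          _ ≤ 9 * (eConv (eConv A' B) C k ^ 2 + eConv (eConv A B') C k ^ 2 +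
                eConv (eConv A B) C' k ^ 2) := this
          _ = 9 * (eConv (eConv A' B) C k ^ 2 +
                (eConv (eConv A B') C k ^ 2 + eConv (eConv A B) C' k ^ 2)) := by
              rw [add_assoc]
    _ = ENNReal.ofReal (9 ^ s) * (9 *
          ((∑' k, eConv (eConv A' B) C k ^ 2) +
            ((∑' k, eConv (eConv A B') C k ^ 2) + ∑' k, eConv (eConv A B) C' k ^ 2))) := by
        rw [ENNReal.tsum_mul_left, ENNReal.tsum_add, ENNReal.tsum_add]
    _ ≤ ENNReal.ofReal (9 ^ s) * (9 *
          (3 * (ENNReal.ofReal (2 * CS ^ 2) * (eN2 d s A * (eN2 d σ B * eN2 d σ C))))) := by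
        refine mul_le_mul' le_rfl (mul_le_mul' le_rfl ?_)
        calc _ ≤ ENNReal.ofReal (2 * CS ^ 2) * (eN2 d s A * (eN2 d σ B * eN2 d σ C)) +
              (ENNReal.ofReal (2 * CS ^ 2) * (eN2 d s A * (eN2 d σ B * eN2 d σ C)) +
               ENNReal.ofReal (2 * CS ^ 2) * (eN2 d s A * (eN2 d σ B * eN2 d σ C))) :=
              add_le_add hXA (add_le_add hXB hXC)
          _ = 3 * (ENNReal.ofReal (2 * CS ^ 2) * (eN2 d s A * (eN2 d σ B * eN2 d σ C))) := by
              ring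
    _ = ENNReal.ofReal (9 ^ s * 9 * 3 * (2 * CS ^ 2)) *
          (eN2 d s A * (eN2 d σ B * eN2 d σ C)) := by
        rw [ENNReal.ofReal_mul (show (0:ℝ) ≤ 9 ^ s * 9 * 3 by positivity),
          ENNReal.ofReal_mul (show (0:ℝ) ≤ 9 ^ s * 9 by positivity),
          ENNReal.ofReal_mul (show (0:ℝ) ≤ (9:ℝ) ^ s by positivity),
          show ENNReal.ofReal (9:ℝ) = (9 : ℝ≥0∞) by simp,
          show ENNReal.ofReal (3:ℝ) = (3 : ℝ≥0∞) by simp]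
        ring

lemma enn_tsum_norm_le {ι : Type*} (f : ι → ℂ) :
    (‖∑' i, f i‖₊ : ℝ≥0∞) ≤ ∑' i, (‖f i‖₊ : ℝ≥0∞) := by
  by_cases htop : (∑' i, (‖f i‖₊ : ℝ≥0∞)) = ⊤
  · rw [htop]; exact le_top
  · have hsum : Summable fun i => ‖f i‖₊ := ENNReal.tsum_coe_ne_top_iff_summable.mp htop
    have hsumR : Summable fun i => ‖f i‖ := by
      simpa [← NNReal.summable_coe, coe_nnnorm] using hsum
    have h1 : ‖∑' i, f i‖ ≤ ∑' i, ‖f i‖ := norm_tsum_le_tsum_norm hsumR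
    calc (‖∑' i, f i‖₊ : ℝ≥0∞) = ENNReal.ofReal ‖∑' i, f i‖ :=
          (ofReal_norm _).symm
      _ ≤ ENNReal.ofReal (∑' i, ‖f i‖) := ENNReal.ofReal_le_ofReal h1
      _ = ∑' i, (‖f i‖₊ : ℝ≥0∞) := by
          rw [ENNReal.ofReal_tsum_of_nonneg (fun i => norm_nonneg _) hsumR]
          exact tsum_congr fun i => ofReal_norm _

lemma summable_of_enn {ι : Type*} {f : ι → ℂ} (h : (∑' i, (‖f i‖₊ : ℝ≥0∞)) ≠ ⊤) :
    Summable f := by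
  have hsum : Summable fun i => ‖f i‖₊ := ENNReal.tsum_coe_ne_top_iff_summable.mp h
  have hsumR : Summable fun i => ‖f i‖ := by
    simpa [← NNReal.summable_coe, coe_nnnorm] using hsum
  exact hsumR.of_norm

lemma eA_conv_le (a b : TSeq d) (k : Fin d → ℤ) :
    (‖convSeq d a b k‖₊ : ℝ≥0∞) ≤ eConv (eA a) (eA b) k := by
  refine le_trans (enn_tsum_norm_le _) (le_of_eq (tsum_congr fun l => ?_))
  rw [nnnorm_mul, ENNReal.coe_mul]; rfl

lemma eA_triple_le (a b c : TSeq d) (k : Fin d → ℤ) :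
    (‖convSeq d (convSeq d a b) c k‖₊ : ℝ≥0∞) ≤ eConv (eConv (eA a) (eA b)) (eA c) k := by
  refine le_trans (enn_tsum_norm_le _) ?_
  refine le_trans (ENNReal.tsum_le_tsum fun l => ?_) le_rfl
  rw [nnnorm_mul, ENNReal.coe_mul]
  exact mul_le_mul' (eA_conv_le a b l) le_rfl

lemma eN2_conj (t : ℝ) (a : TSeq d) : eN2 d t (eA (conjSeq d a)) = eN2 d t (eA a) := by
  rw [eN2, eN2, ← (Equiv.neg (Fin d → ℤ)).tsum_eq (fun k => Pw d t k * eA a k ^ 2)]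
  refine tsum_congr fun k => ?_
  simp only [Equiv.neg_apply, Pw_neg']
  congr 2
  rw [eA, eA, conjSeq]
  simp

lemma hnorm_sq_eq (t : ℝ) (a : TSeq d) : Hnorm d t a ^ 2 = ∑' k, wt d t k * ‖a k‖ ^ 2 :=
  Real.sq_sqrt (tsum_nonneg fun k => mul_nonneg (wt_nonneg k) (sq_nonneg _))

lemma eN2_eA_le {t : ℝ} (ht : 0 ≤ t) {a : TSeq d} (ha : InHs d t a) :
    eN2 d t (eA a) ≤ ENNReal.ofReal (2 ^ t * Hnorm d t a ^ 2) := by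
  have hterm : ∀ k, Pw d t k * eA a k ^ 2 = ENNReal.ofReal (pw d t k * ‖a k‖ ^ 2) := by
    intro k
    rw [eA, ← @id (ENNReal.ofReal ‖a k‖ = (‖a k‖₊ : ℝ≥0∞)) (ofReal_norm (a k)), ← ENNReal.ofReal_pow (norm_nonneg _),
      Pw, ← ENNReal.ofReal_mul (pw_nonneg _ _)]
  calc eN2 d t (eA a) = ∑' k, ENNReal.ofReal (pw d t k * ‖a k‖ ^ 2) := tsum_congr hterm
    _ ≤ ∑' k, ENNReal.ofReal (2 ^ t * (wt d t k * ‖a k‖ ^ 2)) := by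
        refine ENNReal.tsum_le_tsum fun k => ENNReal.ofReal_le_ofReal ?_
        have := pw_le_wt ht k
        have h2 := sq_nonneg ‖a k‖
        nlinarith [Real.rpow_nonneg (show (0:ℝ) ≤ 2 by norm_num) t, wt_nonneg (s := t) k]
    _ = ENNReal.ofReal (∑' k, 2 ^ t * (wt d t k * ‖a k‖ ^ 2)) := by
        rw [ENNReal.ofReal_tsum_of_nonneg]
        · intro k
          have := wt_nonneg (s := t) (d := d) k
          have h2 := sq_nonneg ‖a k‖
          positivity
        · exact ha.mul_left _
    _ = ENNReal.ofReal (2 ^ t * Hnorm d t a ^ 2) := by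
        rw [tsum_mul_left, hnorm_sq_eq]

/-- main bridge back to the real world -/
lemma wtsum_le {s : ℝ} (hs : 0 ≤ s) (x : TSeq d) {E : (Fin d → ℤ) → ℝ≥0∞}
    (hM : ∀ k, (‖x k‖₊ : ℝ≥0∞) ≤ E k) {B : ℝ} (hB : 0 ≤ B)
    (hE : (∑' k, Pw d s k * E k ^ 2) ≤ ENNReal.ofReal B) :
    (∑' k, wt d s k * ‖x k‖ ^ 2) ≤ 2 * B := by
  have henn : (∑' k, ENNReal.ofReal (wt d s k * ‖x k‖ ^ 2)) ≤ ENNReal.ofReal (2 * B) := by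
    calc (∑' k, ENNReal.ofReal (wt d s k * ‖x k‖ ^ 2))
        ≤ ∑' k, 2 * (Pw d s k * E k ^ 2) := by
          refine ENNReal.tsum_le_tsum fun k => ?_
          have h1 : ENNReal.ofReal (wt d s k * ‖x k‖ ^ 2) ≤
              ENNReal.ofReal (2 * (pw d s k * ‖x k‖ ^ 2)) := by
            refine ENNReal.ofReal_le_ofReal ?_
            have := wt_le_two_pw hs k
            nlinarith [sq_nonneg ‖x k‖]
          have h2 : ENNReal.ofReal (2 * (pw d s k * ‖x k‖ ^ 2)) =
              2 * (Pw d s k * (‖x k‖₊ : ℝ≥0∞) ^ 2) := by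
            rw [ENNReal.ofReal_mul (by norm_num), Pw,
              ENNReal.ofReal_mul (pw_nonneg _ _), ENNReal.ofReal_pow (norm_nonneg _),
              @id (ENNReal.ofReal ‖x k‖ = (‖x k‖₊ : ℝ≥0∞)) (ofReal_norm (x k)), ENNReal.ofReal_ofNat]
          refine le_trans h1 (le_trans (le_of_eq h2) ?_)
          exact mul_le_mul' le_rfl (mul_le_mul' le_rfl (pow_le_pow_left' (hM k) 2))
      _ = 2 * ∑' k, Pw d s k * E k ^ 2 := ENNReal.tsum_mul_left
      _ ≤ 2 * ENNReal.ofReal B := mul_le_mul' le_rfl hE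
      _ = ENNReal.ofReal (2 * B) := by
          rw [ENNReal.ofReal_mul (by norm_num)]; simp
  by_cases hsum : Summable fun k => wt d s k * ‖x k‖ ^ 2
  · have := (ENNReal.ofReal_tsum_of_nonneg
      (fun k => mul_nonneg (wt_nonneg k) (sq_nonneg _)) hsum) ▸ henn
    exact (ENNReal.ofReal_le_ofReal_iff (by linarith)).mp this
  · rw [tsum_eq_zero_of_not_summable hsum]; linarith

lemma InHs_mono {s σ : ℝ} (hs : 0 ≤ s) (hsσ : s ≤ σ) {a : TSeq d} (ha : InHs d σ a) :
    InHs d s a := by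
  refine Summable.of_nonneg_of_le
    (fun k => mul_nonneg (wt_nonneg k) (sq_nonneg _)) (fun k => ?_) (ha.mul_left 2)
  have hwt : wt d s k ≤ 2 * wt d σ k := by
    have h1 : nsq k ^ s ≤ 1 + nsq k ^ σ := by
      rcases le_total (nsq k) 1 with h | h
      · have : nsq k ^ s ≤ 1 := Real.rpow_le_one (nsq_nonneg k) h hs
        have := Real.rpow_nonneg (nsq_nonneg k) σ
        linarith
      · have : nsq k ^ s ≤ nsq k ^ σ := Real.rpow_le_rpow_of_exponent_le h hsσ
        linarith
    have := one_le_wt (s := σ) (d := d) k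
    unfold wt at *
    linarith
  have := sq_nonneg ‖a k‖
  nlinarith [wt_nonneg (s := σ) (d := d) k]

lemma InHs_sub {s : ℝ} {v w : TSeq d} (hv : InHs d s v) (hw : InHs d s w) :
    InHs d s (v - w) := by
  refine Summable.of_nonneg_of_le
    (fun k => mul_nonneg (wt_nonneg k) (sq_nonneg _)) (fun k => ?_)
    ((hv.mul_left 2).add (hw.mul_left 2))
  have htri : ‖(v - w) k‖ ≤ ‖v k‖ + ‖w k‖ := by
    simpa [Pi.sub_apply] using norm_sub_le (v k) (w k)
  have h0 : (0:ℝ) ≤ ‖v k‖ := norm_nonneg _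
  have h1 : (0:ℝ) ≤ ‖w k‖ := norm_nonneg _
  have hsq : ‖(v - w) k‖ ^ 2 ≤ 2 * ‖v k‖ ^ 2 + 2 * ‖w k‖ ^ 2 := by
    nlinarith [norm_nonneg ((v - w) k), sq_nonneg (‖v k‖ - ‖w k‖)]
  have hw0 := wt_nonneg (s := s) (d := d) k
  nlinarith

lemma l1_of_inhs {σ : ℝ} (hσ0 : 0 ≤ σ) (hsum : Summable (fun k : Fin d → ℤ => pw d (-σ) k))
    {a : TSeq d} (ha : InHs d σ a) : Summable fun k => ‖a k‖ := by
  have h1 : eN1 (eA a) ^ 2 ≤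
      ENNReal.ofReal (∑' j, pw d (-σ) j) * eN2 d σ (eA a) := eN1_sq_le hsum (eA a)
  have h2 : eN2 d σ (eA a) ≠ ⊤ :=
    ne_top_of_le_ne_top ENNReal.ofReal_ne_top (eN2_eA_le hσ0 ha)
  have h3 : eN1 (eA a) ^ 2 ≠ ⊤ :=
    ne_top_of_le_ne_top (ENNReal.mul_ne_top ENNReal.ofReal_ne_top h2) h1
  have h4 : eN1 (eA a) ≠ ⊤ := by
    intro hc
    rw [hc] at h3
    simp at h3
  have hsum2 : Summable fun k => ‖a k‖₊ := ENNReal.tsum_coe_ne_top_iff_summable.mp h4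
  simpa [← NNReal.summable_coe, coe_nnnorm] using hsum2

lemma eN1_ne_top_of_l1 {a : TSeq d} (ha : Summable fun k => ‖a k‖) : eN1 (eA a) ≠ ⊤ := by
  have : Summable fun k => ‖a k‖₊ := by
    rw [← NNReal.summable_coe]
    exact ha.congr fun k => (coe_nnnorm _).symm
  exact ENNReal.tsum_coe_ne_top_iff_summable.mpr this

lemma summable_mul_shift {a b : TSeq d} (ha : Summable fun k => ‖a k‖)
    (hb : Summable fun k => ‖b k‖) (k : Fin d → ℤ) :
    Summable fun l => a l * b (k - l) := by
  have hMb : ∀ m, ‖b m‖ ≤ ∑' j, ‖b j‖ := fun m => Summable.le_tsum hb m fun j _ => norm_nonneg _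
  refine Summable.of_norm (Summable.of_nonneg_of_le (fun l => norm_nonneg _)
    (fun l => ?_) (ha.mul_right (∑' j, ‖b j‖)))
  rw [norm_mul]
  exact mul_le_mul_of_nonneg_left (hMb (k - l)) (norm_nonneg _)

lemma summable_conv_mul_shift {a b c : TSeq d} (ha : Summable fun k => ‖a k‖)
    (hb : Summable fun k => ‖b k‖) (hc : Summable fun k => ‖c k‖) (k : Fin d → ℤ) :
    Summable fun l => convSeq d a b l * c (k - l) := by
  have hbd : (∑' l, (‖convSeq d a b l * c (k - l)‖₊ : ℝ≥0∞)) ≤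
      (eN1 (eA a) * eN1 (eA b)) * eN1 (eA c) := by
    calc (∑' l, (‖convSeq d a b l * c (k - l)‖₊ : ℝ≥0∞))
        ≤ ∑' l, eConv (eA a) (eA b) l * eA c (k - l) := by
          refine ENNReal.tsum_le_tsum fun l => ?_
          rw [nnnorm_mul, ENNReal.coe_mul]
          exact mul_le_mul' (eA_conv_le a b l) le_rfl
      _ = eConv (eConv (eA a) (eA b)) (eA c) k := rfl
      _ ≤ eN1 (eConv (eA a) (eA b)) * eN1 (eA c) := eConv_le _ _ _
      _ = (eN1 (eA a) * eN1 (eA b)) * eN1 (eA c) := by rw [eN1_eConv]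
  refine summable_of_enn (ne_top_of_le_ne_top ?_ hbd)
  exact ENNReal.mul_ne_top
    (ENNReal.mul_ne_top (eN1_ne_top_of_l1 ha) (eN1_ne_top_of_l1 hb)) (eN1_ne_top_of_l1 hc)

lemma l1_conj {a : TSeq d} (ha : Summable fun k => ‖a k‖) :
    Summable fun k => ‖conjSeq d a k‖ := by
  have h := (Equiv.neg (Fin d → ℤ)).summable_iff.mpr ha
  refine h.congr fun k => ?_
  simp [conjSeq]

lemma l1_sub {v w : TSeq d} (hv : Summable fun k => ‖v k‖) (hw : Summable fun k => ‖w k‖) :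
    Summable fun k => ‖(v - w) k‖ := by
  refine Summable.of_nonneg_of_le (fun k => norm_nonneg _) (fun k => ?_) (hv.add hw)
  simpa [Pi.sub_apply] using norm_sub_le (v k) (w k)

lemma diff_decomp {v w : TSeq d} (hv : Summable fun k => ‖v k‖)
    (hw : Summable fun k => ‖w k‖) (k : Fin d → ℤ) :
    (convSeq d (convSeq d v v) (conjSeq d v) - convSeq d (convSeq d w w) (conjSeq d w)) k =
      convSeq d (convSeq d (v - w) v) (conjSeq d v) k +
      convSeq d (convSeq d w (v - w)) (conjSeq d v) k +
      convSeq d (convSeq d w w) (conjSeq d (v - w)) k := by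
  have hD : Summable fun k => ‖(v - w) k‖ := l1_sub hv hw
  have hcv : Summable fun k => ‖conjSeq d v k‖ := l1_conj hv
  have hcw : Summable fun k => ‖conjSeq d w k‖ := l1_conj hw
  have hcD : Summable fun k => ‖conjSeq d (v - w) k‖ := l1_conj hD
  have i1 : ∀ l, convSeq d v v l = convSeq d (v - w) v l + convSeq d w v l := by
    intro l
    rw [convSeq, convSeq, convSeq,
      ← Summable.tsum_add (summable_mul_shift hD hv l) (summable_mul_shift hw hv l)]
    refine tsum_congr fun m => ?_
    simp only [Pi.sub_apply]
    ring
  have i2 : ∀ l, convSeq d w v l = convSeq d w (v - w) l + convSeq d w w l := by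
    intro l
    rw [convSeq, convSeq, convSeq,
      ← Summable.tsum_add (summable_mul_shift hw hD l) (summable_mul_shift hw hw l)]
    refine tsum_congr fun m => ?_
    simp only [Pi.sub_apply]
    ring
  have i3 : ∀ m, conjSeq d v m = conjSeq d (v - w) m + conjSeq d w m := by
    intro m
    simp only [conjSeq, Pi.sub_apply, map_sub]
    ring
  have o1 : convSeq d (convSeq d v v) (conjSeq d v) k =
      convSeq d (convSeq d (v - w) v) (conjSeq d v) k +
      convSeq d (convSeq d w v) (conjSeq d v) k := by
    rw [convSeq, convSeq, convSeq,
      ← Summable.tsum_add (summable_conv_mul_shift hD hv hcv k) (summable_conv_mul_shift hw hv hcv k)]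
    refine tsum_congr fun l => ?_
    rw [i1 l]
    ring
  have o2 : convSeq d (convSeq d w v) (conjSeq d v) k =
      convSeq d (convSeq d w (v - w)) (conjSeq d v) k +
      convSeq d (convSeq d w w) (conjSeq d v) k := by
    rw [convSeq, convSeq, convSeq,
      ← Summable.tsum_add (summable_conv_mul_shift hw hD hcv k) (summable_conv_mul_shift hw hw hcv k)]
    refine tsum_congr fun l => ?_
    rw [i2 l]
    ring
  have o3 : convSeq d (convSeq d w w) (conjSeq d v) k =
      convSeq d (convSeq d w w) (conjSeq d (v - w)) k +
      convSeq d (convSeq d w w) (conjSeq d w) k := by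
    rw [convSeq, convSeq, convSeq,
      ← Summable.tsum_add (summable_conv_mul_shift hw hw hcD k) (summable_conv_mul_shift hw hw hcw k)]
    refine tsum_congr fun l => ?_
    rw [i3 (k - l)]
    ring
  have : (convSeq d (convSeq d v v) (conjSeq d v) -
      convSeq d (convSeq d w w) (conjSeq d w)) k =
      convSeq d (convSeq d v v) (conjSeq d v) k -
      convSeq d (convSeq d w w) (conjSeq d w) k := rfl
  rw [this, o1, o2, o3]
  ring

end CubicAux

open CubicAux in
open scoped ENNReal NNReal in
set_option maxHeartbeats 1000000 in
/-- nonlinear estimates (18): bounds on the cubic nonlinearity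
`w²w̄` in `H^s`, with `σ > d/2`, `σ ≥ s` if `s ≤ d/2`, and `σ = s` if `s > d/2`. -/
theorem cubic_nonlinearity_estimates (d : ℕ) (hd : 1 ≤ d) (s σ : ℝ)
    (hs : 0 ≤ s) (hσ : (d : ℝ) / 2 < σ)
    (hσ1 : s ≤ (d : ℝ) / 2 → s ≤ σ) (hσ2 : (d : ℝ) / 2 < s → σ = s) :
    ∃ c > (0 : ℝ), ∀ v w : TSeq d,
      InHs d (max s σ) v → InHs d (max s σ) w →
      Hnorm d s (convSeq d (convSeq d w w) (conjSeq d w)) ≤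
          c * Hnorm d σ w ^ 2 * Hnorm d s w ∧
      Hnorm d s (convSeq d (convSeq d v v) (conjSeq d v)
          - convSeq d (convSeq d w w) (conjSeq d w)) ≤
        c * Hnorm d s (v - w) *
          (Hnorm d σ v ^ 2 + Hnorm d σ v * Hnorm d σ w + Hnorm d σ w ^ 2) := by
  have hsσ : s ≤ σ := by
    by_cases h : s ≤ (d : ℝ) / 2
    · exact hσ1 h
    · exact le_of_eq (hσ2 (lt_of_not_ge h)).symm
  have hσ0 : 0 ≤ σ := le_trans hs hsσ
  have hmax : max s σ = σ := max_eq_right hsσ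
  have hsum := summable_pw_neg_sigma (d := d) hd hσ
  obtain ⟨K, hK0, hkey⟩ := key (d := d) hs hsσ hsum
  set c : ℝ := Real.sqrt (18 * K * 2 ^ s * (2 ^ σ) ^ 2) + 1 with hcdef
  have h2s : (0:ℝ) < 2 ^ s := Real.rpow_pos_of_pos two_pos s
  have h2σ : (0:ℝ) < 2 ^ σ := Real.rpow_pos_of_pos two_pos σ
  have hKP : (0:ℝ) ≤ 18 * K * 2 ^ s * (2 ^ σ) ^ 2 := by
    have : (0:ℝ) ≤ 18 * K := by linarith
    positivity
  have hc0 : 0 < c := by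
    have := Real.sqrt_nonneg (18 * K * 2 ^ s * (2 ^ σ) ^ 2)
    rw [hcdef]; linarith
  have hc2 : 18 * K * 2 ^ s * (2 ^ σ) ^ 2 ≤ c ^ 2 := by
    have h := Real.sq_sqrt hKP
    rw [hcdef]
    nlinarith [Real.sqrt_nonneg (18 * K * 2 ^ s * (2 ^ σ) ^ 2)]
  refine ⟨c, hc0, fun v w hv0 hw0 => ?_⟩
  rw [hmax] at hv0 hw0
  have hvs : InHs d s v := InHs_mono hs hsσ hv0
  have hws : InHs d s w := InHs_mono hs hsσ hw0
  have hDs : InHs d s (v - w) := InHs_sub hvs hws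
  have hv1 : Summable fun k => ‖v k‖ := l1_of_inhs hσ0 hsum hv0
  have hw1 : Summable fun k => ‖w k‖ := l1_of_inhs hσ0 hsum hw0
  have hav : 0 ≤ Hnorm d σ v := Real.sqrt_nonneg _
  have haw : 0 ≤ Hnorm d σ w := Real.sqrt_nonneg _
  have hsw : 0 ≤ Hnorm d s w := Real.sqrt_nonneg _
  have hsD : 0 ≤ Hnorm d s (v - w) := Real.sqrt_nonneg _
  constructor
  · -- part (i)
    set x := convSeq d (convSeq d w w) (conjSeq d w) with hx
    set B1 : ℝ := K * ((2 ^ s * Hnorm d s w ^ 2) *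
      ((2 ^ σ * Hnorm d σ w ^ 2) * (2 ^ σ * Hnorm d σ w ^ 2))) with hB1
    have hB10 : 0 ≤ B1 := mul_nonneg hK0 (by positivity)
    have hM : ∀ k, (‖x k‖₊ : ℝ≥0∞) ≤ eConv (eConv (eA w) (eA w)) (eA (conjSeq d w)) k :=
      fun k => eA_triple_le w w (conjSeq d w) k
    have hEbound : (∑' k, Pw d s k * eConv (eConv (eA w) (eA w)) (eA (conjSeq d w)) k ^ 2) ≤
        ENNReal.ofReal B1 := by
      refine le_trans (hkey (eA w) (eA w) (eA (conjSeq d w))) ?_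
      rw [eN2_conj]
      calc ENNReal.ofReal K * (eN2 d s (eA w) * (eN2 d σ (eA w) * eN2 d σ (eA w)))
          ≤ ENNReal.ofReal K * (ENNReal.ofReal (2 ^ s * Hnorm d s w ^ 2) *
              (ENNReal.ofReal (2 ^ σ * Hnorm d σ w ^ 2) *
               ENNReal.ofReal (2 ^ σ * Hnorm d σ w ^ 2))) :=
            mul_le_mul' le_rfl (mul_le_mul' (eN2_eA_le hs hws)
              (mul_le_mul' (eN2_eA_le hσ0 hw0) (eN2_eA_le hσ0 hw0)))
        _ = ENNReal.ofReal B1 := by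
            rw [← ENNReal.ofReal_mul (show (0:ℝ) ≤ 2 ^ σ * Hnorm d σ w ^ 2 by positivity),
              ← ENNReal.ofReal_mul (show (0:ℝ) ≤ 2 ^ s * Hnorm d s w ^ 2 by positivity),
              ← ENNReal.ofReal_mul hK0, hB1]
    have hreal : (∑' k, wt d s k * ‖x k‖ ^ 2) ≤ 2 * B1 := wtsum_le hs x hM hB10 hEbound
    have hKQ0 : (0:ℝ) ≤ K * 2 ^ s * (2 ^ σ) ^ 2 :=
      mul_nonneg (mul_nonneg hK0 h2s.le) (by positivity)
    have hfin : 2 * B1 ≤ (c * Hnorm d σ w ^ 2 * Hnorm d s w) ^ 2 := by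
      calc 2 * B1 = (2 * (K * 2 ^ s * (2 ^ σ) ^ 2)) *
            (Hnorm d s w ^ 2 * (Hnorm d σ w ^ 2) ^ 2) := by rw [hB1]; ring
        _ ≤ c ^ 2 * (Hnorm d s w ^ 2 * (Hnorm d σ w ^ 2) ^ 2) := by
            refine mul_le_mul_of_nonneg_right ?_ (by positivity)
            nlinarith [hc2, hKQ0]
        _ = (c * Hnorm d σ w ^ 2 * Hnorm d s w) ^ 2 := by ring
    calc Hnorm d s x = Real.sqrt (∑' k, wt d s k * ‖x k‖ ^ 2) := rfl
      _ ≤ Real.sqrt ((c * Hnorm d σ w ^ 2 * Hnorm d s w) ^ 2) :=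
          Real.sqrt_le_sqrt (le_trans hreal hfin)
      _ = c * Hnorm d σ w ^ 2 * Hnorm d s w :=
          Real.sqrt_sq (mul_nonneg (mul_nonneg hc0.le (by positivity)) hsw)
  · -- part (ii)
    set D := v - w with hD
    set x := convSeq d (convSeq d v v) (conjSeq d v) -
      convSeq d (convSeq d w w) (conjSeq d w) with hx
    set E1 := eConv (eConv (eA D) (eA v)) (eA (conjSeq d v)) with hE1
    set E2 := eConv (eConv (eA w) (eA D)) (eA (conjSeq d v)) with hE2
    set E3 := eConv (eConv (eA w) (eA w)) (eA (conjSeq d D)) with hE3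
    have hM : ∀ k, (‖x k‖₊ : ℝ≥0∞) ≤ E1 k + E2 k + E3 k := by
      intro k
      rw [hx, diff_decomp hv1 hw1 k]
      set T1 := convSeq d (convSeq d D v) (conjSeq d v) k
      set T2 := convSeq d (convSeq d w D) (conjSeq d v) k
      set T3 := convSeq d (convSeq d w w) (conjSeq d D) k
      have h1 : ‖T1 + T2 + T3‖₊ ≤ ‖T1‖₊ + ‖T2‖₊ + ‖T3‖₊ :=
        le_trans (nnnorm_add_le _ _) (add_le_add_left (nnnorm_add_le _ _) _)
      calc (‖T1 + T2 + T3‖₊ : ℝ≥0∞) ≤ ((‖T1‖₊ + ‖T2‖₊ + ‖T3‖₊ : ℝ≥0) : ℝ≥0∞) :=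
            ENNReal.coe_le_coe.mpr h1
        _ = (‖T1‖₊ : ℝ≥0∞) + (‖T2‖₊ : ℝ≥0∞) + (‖T3‖₊ : ℝ≥0∞) := by push_cast; rfl
        _ ≤ E1 k + E2 k + E3 k :=
            add_le_add (add_le_add (eA_triple_le _ _ _ k) (eA_triple_le _ _ _ k))
              (eA_triple_le _ _ _ k)
    set Ba : ℝ := K * ((2 ^ s * Hnorm d s D ^ 2) *
      ((2 ^ σ * Hnorm d σ v ^ 2) * (2 ^ σ * Hnorm d σ v ^ 2))) with hBa
    set Bb : ℝ := K * ((2 ^ s * Hnorm d s D ^ 2) *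
      ((2 ^ σ * Hnorm d σ w ^ 2) * (2 ^ σ * Hnorm d σ v ^ 2))) with hBb
    set Bc : ℝ := K * ((2 ^ s * Hnorm d s D ^ 2) *
      ((2 ^ σ * Hnorm d σ w ^ 2) * (2 ^ σ * Hnorm d σ w ^ 2))) with hBc
    have hBa0 : 0 ≤ Ba := mul_nonneg hK0 (by positivity)
    have hBb0 : 0 ≤ Bb := mul_nonneg hK0 (by positivity)
    have hBc0 : 0 ≤ Bc := mul_nonneg hK0 (by positivity)
    have hmerge : ∀ P Q R : ℝ, ENNReal.ofReal K * (ENNReal.ofReal (2 ^ s * P) *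
        (ENNReal.ofReal (2 ^ σ * Q) * ENNReal.ofReal (2 ^ σ * R))) =
        ENNReal.ofReal (K * ((2 ^ s * P) * ((2 ^ σ * Q) * (2 ^ σ * R)))) → True := fun _ _ _ _ => trivial
    have hE1b : (∑' k, Pw d s k * E1 k ^ 2) ≤ ENNReal.ofReal Ba := by
      rw [hE1]
      refine le_trans (hkey (eA D) (eA v) (eA (conjSeq d v))) ?_
      rw [eN2_conj]
      calc ENNReal.ofReal K * (eN2 d s (eA D) * (eN2 d σ (eA v) * eN2 d σ (eA v)))
          ≤ ENNReal.ofReal K * (ENNReal.ofReal (2 ^ s * Hnorm d s D ^ 2) *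
              (ENNReal.ofReal (2 ^ σ * Hnorm d σ v ^ 2) *
               ENNReal.ofReal (2 ^ σ * Hnorm d σ v ^ 2))) :=
            mul_le_mul' le_rfl (mul_le_mul' (eN2_eA_le hs hDs)
              (mul_le_mul' (eN2_eA_le hσ0 hv0) (eN2_eA_le hσ0 hv0)))
        _ = ENNReal.ofReal Ba := by
            rw [← ENNReal.ofReal_mul (show (0:ℝ) ≤ 2 ^ σ * Hnorm d σ v ^ 2 by positivity),
              ← ENNReal.ofReal_mul (show (0:ℝ) ≤ 2 ^ s * Hnorm d s D ^ 2 by positivity),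
              ← ENNReal.ofReal_mul hK0, hBa]
    have hE2b : (∑' k, Pw d s k * E2 k ^ 2) ≤ ENNReal.ofReal Bb := by
      rw [hE2, eConv_comm (eA w) (eA D)]
      refine le_trans (hkey (eA D) (eA w) (eA (conjSeq d v))) ?_
      rw [eN2_conj]
      calc ENNReal.ofReal K * (eN2 d s (eA D) * (eN2 d σ (eA w) * eN2 d σ (eA v)))
          ≤ ENNReal.ofReal K * (ENNReal.ofReal (2 ^ s * Hnorm d s D ^ 2) *
              (ENNReal.ofReal (2 ^ σ * Hnorm d σ w ^ 2) *
               ENNReal.ofReal (2 ^ σ * Hnorm d σ v ^ 2))) :=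
            mul_le_mul' le_rfl (mul_le_mul' (eN2_eA_le hs hDs)
              (mul_le_mul' (eN2_eA_le hσ0 hw0) (eN2_eA_le hσ0 hv0)))
        _ = ENNReal.ofReal Bb := by
            rw [← ENNReal.ofReal_mul (show (0:ℝ) ≤ 2 ^ σ * Hnorm d σ w ^ 2 by positivity),
              ← ENNReal.ofReal_mul (show (0:ℝ) ≤ 2 ^ s * Hnorm d s D ^ 2 by positivity),
              ← ENNReal.ofReal_mul hK0, hBb]
    have hE3b : (∑' k, Pw d s k * E3 k ^ 2) ≤ ENNReal.ofReal Bc := by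
      rw [hE3, eConv_rot (eA w) (eA w) (eA (conjSeq d D))]
      refine le_trans (hkey (eA (conjSeq d D)) (eA w) (eA w)) ?_
      rw [eN2_conj]
      calc ENNReal.ofReal K * (eN2 d s (eA D) * (eN2 d σ (eA w) * eN2 d σ (eA w)))
          ≤ ENNReal.ofReal K * (ENNReal.ofReal (2 ^ s * Hnorm d s D ^ 2) *
              (ENNReal.ofReal (2 ^ σ * Hnorm d σ w ^ 2) *
               ENNReal.ofReal (2 ^ σ * Hnorm d σ w ^ 2))) :=
            mul_le_mul' le_rfl (mul_le_mul' (eN2_eA_le hs hDs)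
              (mul_le_mul' (eN2_eA_le hσ0 hw0) (eN2_eA_le hσ0 hw0)))
        _ = ENNReal.ofReal Bc := by
            rw [← ENNReal.ofReal_mul (show (0:ℝ) ≤ 2 ^ σ * Hnorm d σ w ^ 2 by positivity),
              ← ENNReal.ofReal_mul (show (0:ℝ) ≤ 2 ^ s * Hnorm d s D ^ 2 by positivity),
              ← ENNReal.ofReal_mul hK0, hBc]
    set B2 : ℝ := 9 * (Ba + (Bb + Bc)) with hB2
    have hB20 : 0 ≤ B2 := by rw [hB2]; linarith
    have hEbound : (∑' k, Pw d s k * (E1 k + E2 k + E3 k) ^ 2) ≤ ENNReal.ofReal B2 := by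
      calc (∑' k, Pw d s k * (E1 k + E2 k + E3 k) ^ 2)
          ≤ ∑' k, 9 * (Pw d s k * E1 k ^ 2 +
              (Pw d s k * E2 k ^ 2 + Pw d s k * E3 k ^ 2)) := by
            refine ENNReal.tsum_le_tsum fun k => ?_
            calc Pw d s k * (E1 k + E2 k + E3 k) ^ 2
                ≤ Pw d s k * (9 * (E1 k ^ 2 + E2 k ^ 2 + E3 k ^ 2)) :=
                  mul_le_mul' le_rfl (enn_add3_sq _ _ _)
              _ = 9 * (Pw d s k * E1 k ^ 2 +
                  (Pw d s k * E2 k ^ 2 + Pw d s k * E3 k ^ 2)) := by ring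
        _ = 9 * ((∑' k, Pw d s k * E1 k ^ 2) +
              ((∑' k, Pw d s k * E2 k ^ 2) + (∑' k, Pw d s k * E3 k ^ 2))) := by
            rw [ENNReal.tsum_mul_left, ENNReal.tsum_add, ENNReal.tsum_add]
        _ ≤ 9 * (ENNReal.ofReal Ba + (ENNReal.ofReal Bb + ENNReal.ofReal Bc)) :=
            mul_le_mul' le_rfl (add_le_add hE1b (add_le_add hE2b hE3b))
        _ = ENNReal.ofReal B2 := by
            rw [hB2, ENNReal.ofReal_mul (p := (9:ℝ)) (by norm_num),
              ENNReal.ofReal_add hBa0 (by linarith),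
              ENNReal.ofReal_add hBb0 hBc0]
            norm_num
    have hreal : (∑' k, wt d s k * ‖x k‖ ^ 2) ≤ 2 * B2 := wtsum_le hs x hM hB20 hEbound
    have hpoly : Hnorm d σ v ^ 4 + Hnorm d σ v ^ 2 * Hnorm d σ w ^ 2 + Hnorm d σ w ^ 4 ≤
        (Hnorm d σ v ^ 2 + Hnorm d σ v * Hnorm d σ w + Hnorm d σ w ^ 2) ^ 2 := by
      nlinarith [mul_nonneg (mul_nonneg (mul_nonneg hav hav) hav) haw,
        mul_nonneg (mul_nonneg (mul_nonneg hav haw) haw) haw,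
        mul_nonneg (mul_nonneg hav hav) (mul_nonneg haw haw)]
    have hKQ0 : (0:ℝ) ≤ K * 2 ^ s * (2 ^ σ) ^ 2 :=
      mul_nonneg (mul_nonneg hK0 h2s.le) (by positivity)
    have hfin : 2 * B2 ≤ (c * Hnorm d s D *
        (Hnorm d σ v ^ 2 + Hnorm d σ v * Hnorm d σ w + Hnorm d σ w ^ 2)) ^ 2 := by
      calc 2 * B2 = (18 * K * 2 ^ s * (2 ^ σ) ^ 2) * (Hnorm d s D ^ 2 *
            (Hnorm d σ v ^ 4 + Hnorm d σ v ^ 2 * Hnorm d σ w ^ 2 + Hnorm d σ w ^ 4)) := by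
            rw [hB2, hBa, hBb, hBc]; ring
        _ ≤ c ^ 2 * (Hnorm d s D ^ 2 *
            (Hnorm d σ v ^ 2 + Hnorm d σ v * Hnorm d σ w + Hnorm d σ w ^ 2) ^ 2) := by
            refine mul_le_mul hc2 ?_ (by positivity) (sq_nonneg c)
            exact mul_le_mul_of_nonneg_left hpoly (sq_nonneg _)
        _ = (c * Hnorm d s D *
            (Hnorm d σ v ^ 2 + Hnorm d σ v * Hnorm d σ w + Hnorm d σ w ^ 2)) ^ 2 := by ring
    have hfac : 0 ≤ Hnorm d σ v ^ 2 + Hnorm d σ v * Hnorm d σ w + Hnorm d σ w ^ 2 := by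
      nlinarith [mul_nonneg hav haw]
    calc Hnorm d s x = Real.sqrt (∑' k, wt d s k * ‖x k‖ ^ 2) := rfl
      _ ≤ Real.sqrt ((c * Hnorm d s D *
          (Hnorm d σ v ^ 2 + Hnorm d σ v * Hnorm d σ w + Hnorm d σ w ^ 2)) ^ 2) :=
          Real.sqrt_le_sqrt (le_trans hreal hfin)
      _ = c * Hnorm d s D *
          (Hnorm d σ v ^ 2 + Hnorm d σ v * Hnorm d σ w + Hnorm d σ w ^ 2) :=
          Real.sqrt_sq (mul_nonneg (mul_nonneg hc0.le hsD) hfac)
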